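/- Let C ⊆ L0+ be convexly compact (convex, closed in the topology of convergence in probability, and bounded), and let (f_n)_{n∈ℕ} be a C-valued sequence converging in probability to some g ∈ C^max. Then every sequence of forward convex combinations of (f_n)_{n∈ℕ} also converges in probability to g. -/

import Mathlib

open MeasureTheory Filter Set

noncomputable section

variable {Ω : Type*} [MeasurableSpace Ω]

/-- The nonnegative orthant `L⁰₊` of the space `L⁰` of (a.e.-equivalence classes of)
random variables over `(Ω, ℱ, P)`. -/
def L0plus (P : Measure Ω) : Set (Ω →ₘ[P] ℝ) := {f | 0 ≤ f}

/-- The metric `(f, g) ↦ E[1 ∧ |f - g|]` inducing the topology of convergence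
in probability on `L⁰`. -/
def dist0 (P : Measure Ω) (f g : Ω →ₘ[P] ℝ) : ℝ :=
  ∫ ω, min 1 |f ω - g ω| ∂P

/-- Convergence in probability of a sequence in `L⁰`. -/
def Tendsto0 (P : Measure Ω) (f : ℕ → Ω →ₘ[P] ℝ) (g : Ω →ₘ[P] ℝ) : Prop :=
  Tendsto (fun n => dist0 P (f n) g) atTop (nhds 0)

/-- Closure of a set in `L⁰` with respect to the topology of convergence in probability. -/
def closure0 (P : Measure Ω) (C : Set (Ω →ₘ[P] ℝ)) : Set (Ω →ₘ[P] ℝ) :=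
  {f | ∀ ε : ℝ, 0 < ε → ∃ g ∈ C, dist0 P f g < ε}

/-- A set of `L⁰` is closed iff it contains its closure. -/
def IsClosed0 (P : Measure Ω) (C : Set (Ω →ₘ[P] ℝ)) : Prop :=
  closure0 P C ⊆ C

/-- Boundedness (in probability) of a set `C ⊆ L⁰₊` : `lim_{ℓ → ∞} sup_{f ∈ C} P[f > ℓ] = 0`. -/
def Bounded0 (P : Measure Ω) (C : Set (Ω →ₘ[P] ℝ)) : Prop :=
  Tendsto (fun ℓ : ℝ => ⨆ f ∈ C, P {ω | ℓ < f ω}) atTop (nhds 0)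

/-- The set `C^max` of maximal elements of `C ⊆ L⁰₊` : `f ∈ C` such that `f ≤ g` a.s.
and `g ∈ C` imply `f = g` a.s. -/
def maxSet (P : Measure Ω) (C : Set (Ω →ₘ[P] ℝ)) : Set (Ω →ₘ[P] ℝ) :=
  {f | f ∈ C ∧ ∀ g ∈ C, f ≤ g → f = g}

/-- `C` is max-closed if every maximal element of its closure already belongs to `C`. -/
def MaxClosed (P : Measure Ω) (C : Set (Ω →ₘ[P] ℝ)) : Prop :=
  maxSet P (closure0 P C) ⊆ C

/-- The pairing `⟨μ, f⟩ = ∫ f dμ ∈ [0, ∞]` between a nonnegative measure `μ` and `f ∈ L⁰₊`. -/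
def pairing {P : Measure Ω} (μ : Measure Ω) (f : Ω →ₘ[P] ℝ) : ENNReal :=
  ∫⁻ ω, ENNReal.ofReal (f ω) ∂μ

/-- The set `C^osp` of outer support points of `C ⊆ L⁰₊`: points `g ∈ C^max` for which there
is a σ-finite nonnegative measure `μ ≪ P` with `0 < sup_{f ∈ C} ⟨μ, f⟩ = ⟨μ, g⟩ < ∞`;
by convention `{0}^osp = {0}`. -/
def osp (P : Measure Ω) (C : Set (Ω →ₘ[P] ℝ)) : Set (Ω →ₘ[P] ℝ) :=
  {g | g ∈ maxSet P C ∧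
    (C = {0} ∨ ∃ μ : Measure Ω, μ ≪ P ∧ SigmaFinite μ ∧
      0 < pairing μ g ∧ pairing μ g < ⊤ ∧ (⨆ f ∈ C, pairing μ f) = pairing μ g)}

/-- The solid hull of `C ⊆ L⁰₊`. -/
def solidHull (P : Measure Ω) (C : Set (Ω →ₘ[P] ℝ)) : Set (Ω →ₘ[P] ℝ) :=
  {f | f ∈ L0plus P ∧ ∃ g ∈ C, f ≤ g}

/-- A set `S ⊆ L⁰₊` is solid if `g ∈ S` and `0 ≤ f ≤ g` imply `f ∈ S`. -/
def Solid (P : Measure Ω) (S : Set (Ω →ₘ[P] ℝ)) : Prop :=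
  ∀ g ∈ S, ∀ f : Ω →ₘ[P] ℝ, 0 ≤ f → f ≤ g → f ∈ S

/-- `(g n)` is a sequence of forward convex combinations of `(f n)`. -/
def ForwardConvexComb (P : Measure Ω) (f g : ℕ → Ω →ₘ[P] ℝ) : Prop :=
  ∀ n : ℕ, g n ∈ convexHull ℝ (f '' Set.Ici n)

end

open MeasureTheory Filter Set

noncomputable section S8sec

namespace S8
open MeasureTheory Filter Set
set_option linter.unusedSectionVars false
set_option linter.unusedVariables false

lemma min1_nonneg {x : ℝ} (hx : 0 ≤ x) : 0 ≤ min 1 x := le_min one_pos.le hx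

lemma min1_subadd {x y : ℝ} (hx : 0 ≤ x) (hy : 0 ≤ y) :
    min 1 (x + y) ≤ min 1 x + min 1 y := by
  rcases le_or_gt (x + y) 1 with h | h
  · rw [min_eq_right h, min_eq_right (by linarith), min_eq_right (by linarith)]
  · rw [min_eq_left h.le]
    rcases le_or_gt 1 x with hx1 | hx1
    · rw [min_eq_left hx1]; linarith [min1_nonneg hy]
    rcases le_or_gt 1 y with hy1 | hy1
    · rw [min_eq_left hy1]; linarith [min1_nonneg hx]
    · rw [min_eq_right hx1.le, min_eq_right hy1.le]; linarith

lemma min1_tri (a b c : ℝ) :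
    min 1 |a - c| ≤ min 1 |a - b| + min 1 |b - c| := by
  have h1 : |a - c| ≤ |a - b| + |b - c| := abs_sub_le a b c
  calc min 1 |a - c| ≤ min 1 (|a - b| + |b - c|) :=
        min_le_min le_rfl h1
    _ ≤ _ := min1_subadd (abs_nonneg _) (abs_nonneg _)

variable {Ω : Type*} [MeasurableSpace Ω] (P : Measure Ω) [IsProbabilityMeasure P]

/-- the functional `J v = ∫ 1 ∧ v`. -/
def J (v : Ω → ℝ) : ℝ := ∫ ω, min 1 (v ω) ∂P

lemma aesm_min1 {v : Ω → ℝ} (hv : AEStronglyMeasurable v P) :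
    AEStronglyMeasurable (fun ω => min 1 (v ω)) P :=
  (continuous_const.min continuous_id).comp_aestronglyMeasurable hv

lemma integrable_min1 {v : Ω → ℝ} (hv : AEStronglyMeasurable v P) (h0 : 0 ≤ᵐ[P] v) :
    Integrable (fun ω => min 1 (v ω)) P := by
  refine (integrable_const (1:ℝ)).mono' (aesm_min1 P hv) ?_
  filter_upwards [h0] with ω hω
  rw [Real.norm_eq_abs, abs_of_nonneg (min1_nonneg hω)]
  exact min_le_left _ _

lemma J_nonneg {v : Ω → ℝ} (h0 : 0 ≤ᵐ[P] v) : 0 ≤ J P v :=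
  integral_nonneg_of_ae <| by filter_upwards [h0] with ω hω using min1_nonneg hω

lemma J_mono {u v : Ω → ℝ} (hu : AEStronglyMeasurable u P) (hv : AEStronglyMeasurable v P)
    (h0 : 0 ≤ᵐ[P] u) (h : u ≤ᵐ[P] v) : J P u ≤ J P v := by
  refine integral_mono_ae (integrable_min1 P hu h0)
    (integrable_min1 P hv (h0.trans h)) ?_
  filter_upwards [h] with ω hω using min_le_min le_rfl hω

lemma J_congr {u v : Ω → ℝ} (h : u =ᵐ[P] v) : J P u = J P v :=
  integral_congr_ae <| by filter_upwards [h] with ω hω; rw [hω]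

lemma dist0_eq_J (f g : Ω →ₘ[P] ℝ) : dist0 P f g = J P (fun ω => |f ω - g ω|) := rfl

lemma dist0_nonneg (f g : Ω →ₘ[P] ℝ) : 0 ≤ dist0 P f g :=
  J_nonneg P (Eventually.of_forall fun ω => abs_nonneg _)

lemma aesm_abs_sub (f g : Ω →ₘ[P] ℝ) :
    AEStronglyMeasurable (fun ω => |f ω - g ω|) P :=
  continuous_abs.comp_aestronglyMeasurable (f.aestronglyMeasurable.sub g.aestronglyMeasurable)

lemma integrable_d (f g : Ω →ₘ[P] ℝ) :
    Integrable (fun ω => min 1 |f ω - g ω|) P :=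
  integrable_min1 P (aesm_abs_sub P f g) (Eventually.of_forall fun ω => abs_nonneg _)

lemma dist0_comm (f g : Ω →ₘ[P] ℝ) : dist0 P f g = dist0 P g f := by
  unfold dist0; congr 1; ext ω; rw [abs_sub_comm]

lemma dist0_triangle (f g h : Ω →ₘ[P] ℝ) :
    dist0 P f h ≤ dist0 P f g + dist0 P g h := by
  have := integral_add (integrable_d P f g) (integrable_d P g h)
  unfold dist0
  rw [← this]
  exact integral_mono_ae (integrable_d P f h)
    ((integrable_d P f g).add (integrable_d P g h))
    (Eventually.of_forall fun ω => min1_tri _ _ _)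

lemma eq_of_dist0_eq_zero {f g : Ω →ₘ[P] ℝ} (h : dist0 P f g = 0) : f = g := by
  have h0 : (fun ω => min 1 |f ω - g ω|) =ᵐ[P] 0 :=
    (integral_eq_zero_iff_of_nonneg (fun ω => min1_nonneg (abs_nonneg _))
      (integrable_d P f g)).mp h
  have : ⇑f =ᵐ[P] ⇑g := by
    filter_upwards [h0] with ω hω
    simp only [Pi.zero_apply] at hω
    have habs : |f ω - g ω| = 0 := by
      rcases le_or_gt |f ω - g ω| 1 with h1 | h1
      · rwa [min_eq_right h1] at hω
      · rw [min_eq_left h1.le] at hω; norm_num at hω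
    have := abs_eq_zero.mp habs; linarith
  exact f.ext this

end S8
open MeasureTheory Filter Set

section
set_option linter.unusedSectionVars false
set_option linter.unusedVariables false
variable {Ω : Type*} [MeasurableSpace Ω] (P : Measure Ω) [IsProbabilityMeasure P]

lemma coeFn_weighted_sum (t : Finset ℕ) (w : ℕ → ℝ) (z : ℕ → Ω →ₘ[P] ℝ) :
    ⇑(∑ i ∈ t, w i • z i) =ᵐ[P] fun ω => ∑ i ∈ t, w i * z i ω := by
  classical
  induction t using Finset.induction_on with
  | empty => simp only [Finset.sum_empty]; exact MeasureTheory.AEEqFun.coeFn_zero (β := ℝ)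
  | @insert a u ha ih =>
    have h1 := MeasureTheory.AEEqFun.coeFn_add (w a • z a) (∑ i ∈ u, w i • z i)
    have h2 := MeasureTheory.AEEqFun.coeFn_smul (w a) (z a)
    rw [Finset.sum_insert ha]
    filter_upwards [h1, h2, ih] with ω hω1 hω2 hω3
    rw [Finset.sum_insert ha, hω1]
    simp only [Pi.add_apply, hω2, Pi.smul_apply, smul_eq_mul, hω3]

lemma rep_of_mem_hull {s : ℕ → Ω →ₘ[P] ℝ} {n : ℕ} {z : Ω →ₘ[P] ℝ}
    (hz : z ∈ convexHull ℝ (s '' Ici n)) :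
    ∃ (t : Finset ℕ) (w : ℕ → ℝ), (∀ m ∈ t, 0 ≤ w m) ∧ (∑ m ∈ t, w m = 1) ∧
      (∀ m ∈ t, n ≤ m) ∧ ⇑z =ᵐ[P] fun ω => ∑ m ∈ t, w m * s m ω := by
  classical
  rw [convexHull_eq] at hz
  obtain ⟨ι, t, w, zf, hw0, hw1, hzs, hcm⟩ := hz
  have hk : ∀ i ∈ t, ∃ m, n ≤ m ∧ s m = zf i := by
    intro i hi
    obtain ⟨m, hm, hsm⟩ := hzs i hi
    exact ⟨m, hm, hsm⟩
  choose! k hk1 hk2 using hk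
  have hzsum : z = ∑ i ∈ t, w i • s (k i) := by
    rw [← hcm, Finset.centerMass_eq_of_sum_1 _ _ hw1]
    exact Finset.sum_congr rfl fun i hi => by rw [hk2 i hi]
  refine ⟨t.image k, fun m => ∑ i ∈ t.filter (fun i => k i = m), w i, ?_, ?_, ?_, ?_⟩
  · intro m hm
    exact Finset.sum_nonneg fun i hi => hw0 i (Finset.mem_of_mem_filter i hi)
  · rw [Finset.sum_fiberwise_of_maps_to (fun i hi => Finset.mem_image_of_mem k hi) w, hw1]
  · intro m hm
    obtain ⟨i, hi, rfl⟩ := Finset.mem_image.mp hm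
    exact hk1 i hi
  · have hz2 : z = ∑ m ∈ t.image k, (∑ i ∈ t.filter (fun i => k i = m), w i) • s m := by
      rw [hzsum, ← Finset.sum_fiberwise_of_maps_to
        (fun i hi => Finset.mem_image_of_mem k hi) (fun i => w i • s (k i))]
      refine Finset.sum_congr rfl fun m hm => ?_
      rw [Finset.sum_smul]
      refine Finset.sum_congr rfl fun i hi => ?_
      rw [(Finset.mem_filter.mp hi).2]
    rw [hz2]
    exact coeFn_weighted_sum P _ _ _

end

namespace S8
set_option linter.unusedSectionVars false
set_option linter.unusedVariables false
set_option maxHeartbeats 1000000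
open MeasureTheory Filter Set

variable {Ω : Type*} [MeasurableSpace Ω] (P : Measure Ω) [IsProbabilityMeasure P]

/-- pointwise claim 1 -/
lemma pw1 {M : ℝ} (hM : 1 ≤ M) (t : Finset ℕ) (w : ℕ → ℝ) (hw0 : ∀ m ∈ t, 0 ≤ w m)
    (ev : ℕ → ℝ) (Dv : ℝ) (hD0 : 0 ≤ Dv) (h : ∀ m ∈ t, 0 ≤ ev m ∧ ev m ≤ Dv) :
    min 1 (∑ m ∈ t, w m * ev m) ≤ min 1 (Dv / M) + ∑ m ∈ t, w m * min (ev m) M := by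
  have hM0 : (0:ℝ) < M := lt_of_lt_of_le one_pos hM
  rcases le_or_gt Dv M with hc | hc
  · have h1 : ∑ m ∈ t, w m * min (ev m) M = ∑ m ∈ t, w m * ev m := by
      refine Finset.sum_congr rfl fun m hm => ?_
      rw [min_eq_left (le_trans (h m hm).2 hc)]
    rw [h1]
    have h2 : (0:ℝ) ≤ min 1 (Dv / M) := min1_nonneg (div_nonneg hD0 hM0.le)
    linarith [min_le_right (1:ℝ) (∑ m ∈ t, w m * ev m)]
  · have h1 : min 1 (Dv / M) = 1 := min_eq_left (by rw [le_div_iff₀ hM0]; linarith)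
    have h2 : (0:ℝ) ≤ ∑ m ∈ t, w m * min (ev m) M :=
      Finset.sum_nonneg fun m hm => mul_nonneg (hw0 m hm) (le_min (h m hm).1 hM0.le)
    have h3 := min_le_left (1:ℝ) (∑ m ∈ t, w m * ev m)
    linarith

/-- pointwise claim 2 -/
lemma pw2 {M x : ℝ} (hM : 1 ≤ M) (hx : 0 ≤ x) : min x M ≤ M * min 1 x := by
  rcases le_or_gt x 1 with h | h
  · rw [min_eq_left (le_trans h hM), min_eq_right h]; nlinarith
  · rw [min_eq_left h.le, mul_one]; exact min_le_right _ _

lemma lemC (D : Ω → ℝ) (hDm : AEStronglyMeasurable D P) (hD0 : 0 ≤ᵐ[P] D)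
    (e : ℕ → Ω → ℝ) (hem : ∀ i, AEStronglyMeasurable (e i) P)
    (he0 : ∀ i, 0 ≤ᵐ[P] (e i)) (heD : ∀ i, e i ≤ᵐ[P] D)
    (hcv : Tendsto (fun i => J P (e i)) atTop (nhds 0))
    (b : ℕ → Ω → ℝ) (hbm : ∀ j, AEStronglyMeasurable (b j) P) (hb0 : ∀ j, 0 ≤ᵐ[P] b j)
    (hb : ∀ j, ∃ (t : Finset ℕ) (w : ℕ → ℝ), (∀ m ∈ t, 0 ≤ w m) ∧ (∑ m ∈ t, w m = 1) ∧
      (∀ m ∈ t, j ≤ m) ∧ b j ≤ᵐ[P] fun ω => ∑ m ∈ t, w m * e m ω) :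
    Tendsto (fun j => J P (b j)) atTop (nhds 0) := by
  rw [Metric.tendsto_atTop]
  intro ε hε
  -- the tail functional
  have hTm : ∀ M : ℕ, Integrable (fun ω => min 1 (D ω / (M+1 : ℝ))) P := fun M =>
    integrable_min1 P ((continuous_id.div_const ((M:ℝ)+1)).comp_aestronglyMeasurable hDm)
      (by filter_upwards [hD0] with ω h using div_nonneg h (by positivity))
  have hT : Tendsto (fun M : ℕ => ∫ ω, min 1 (D ω / (M+1 : ℝ)) ∂P) atTop (nhds 0) := by
    have h0 : (0:ℝ) = ∫ ω, (0:ℝ) ∂P := by simp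
    rw [h0]
    refine tendsto_integral_of_dominated_convergence (fun _ => (1:ℝ))
      (fun M => (hTm M).1) (integrable_const 1) ?_ ?_
    · intro M
      filter_upwards [hD0] with ω h
      rw [Real.norm_eq_abs, abs_of_nonneg (min1_nonneg (div_nonneg h (by positivity)))]
      exact min_le_left _ _
    · filter_upwards [hD0] with ω h
      have hd : Tendsto (fun M : ℕ => D ω / (M+1 : ℝ)) atTop (nhds 0) :=
        tendsto_const_nhds.div_atTop (tendsto_natCast_atTop_atTop.atTop_add tendsto_const_nhds)
      have hcont : Continuous (fun x : ℝ => min 1 x) := continuous_const.min continuous_id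
      have := (hcont.tendsto 0).comp hd
      simpa [Function.comp_def] using this
  obtain ⟨M, hM⟩ := (hT.eventually (gt_mem_nhds (half_pos hε))).exists
  set Mr : ℝ := (M + 1 : ℝ) with hMr
  have hMr1 : 1 ≤ Mr := by
    have : (0:ℝ) ≤ (M:ℝ) := Nat.cast_nonneg M
    simp only [hMr]; linarith
  have hMr0 : (0:ℝ) < Mr := lt_of_lt_of_le one_pos hMr1
  set ε4 : ℝ := ε / (4 * Mr) with hε4
  have hε4pos : 0 < ε4 := by positivity
  obtain ⟨N, hN⟩ := (Metric.tendsto_atTop.mp hcv) ε4 hε4pos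
  refine ⟨N, fun j hj => ?_⟩
  obtain ⟨t, w, hw0, hw1, hwge, hble⟩ := hb j
  -- a.e. facts for all m ∈ t
  have hall : ∀ᵐ ω ∂P, ∀ m ∈ (t : Set ℕ), 0 ≤ e m ω ∧ e m ω ≤ D ω :=
    (MeasureTheory.ae_ball_iff t.countable_toSet).2 fun m _ => (he0 m).and (heD m)
  -- measurability / integrability
  have hsum_m : AEStronglyMeasurable (fun ω => ∑ m ∈ t, w m * e m ω) P :=
    Finset.aestronglyMeasurable_fun_sum t fun m _ => (hem m).const_mul (w m)
  have hsum_0 : 0 ≤ᵐ[P] fun ω => ∑ m ∈ t, w m * e m ω := by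
    filter_upwards [hall] with ω h
    exact Finset.sum_nonneg fun m hm => mul_nonneg (hw0 m hm) (h m hm).1
  have hint_em : ∀ m, Integrable (fun ω => min (e m ω) Mr) P := by
    intro m
    refine (integrable_const Mr).mono'
      ((continuous_id.min continuous_const).comp_aestronglyMeasurable (hem m)) ?_
    filter_upwards [he0 m] with ω h
    rw [Real.norm_eq_abs, abs_of_nonneg (le_min h hMr0.le)]
    exact min_le_right _ _
  have hint_sum2 : Integrable (fun ω => ∑ m ∈ t, w m * min (e m ω) Mr) P :=
    integrable_finset_sum t fun m _ => (hint_em m).const_mul (w m)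
  -- chain of inequalities
  have step1 : J P (b j) ≤ J P (fun ω => ∑ m ∈ t, w m * e m ω) :=
    J_mono P (hbm j) hsum_m (hb0 j) hble
  have step2 : J P (fun ω => ∑ m ∈ t, w m * e m ω) ≤
      (∫ ω, min 1 (D ω / Mr) ∂P) + ∑ m ∈ t, w m * ∫ ω, min (e m ω) Mr ∂P := by
    have hrhs : Integrable (fun ω => min 1 (D ω / Mr) + ∑ m ∈ t, w m * min (e m ω) Mr) P :=
      (hTm M).add hint_sum2
    have hmono : J P (fun ω => ∑ m ∈ t, w m * e m ω) ≤
        ∫ ω, (min 1 (D ω / Mr) + ∑ m ∈ t, w m * min (e m ω) Mr) ∂P := by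
      refine integral_mono_ae (integrable_min1 P hsum_m hsum_0) hrhs ?_
      filter_upwards [hall, hD0] with ω h hDω
      exact pw1 hMr1 t w hw0 (fun m => e m ω) (D ω) hDω (fun m hm => h m hm)
    rw [integral_add (hTm M) hint_sum2, integral_finset_sum t
      (fun m _ => (hint_em m).const_mul (w m))] at hmono
    calc J P (fun ω => ∑ m ∈ t, w m * e m ω) ≤ _ := hmono
      _ = _ := by
        congr 1
        exact Finset.sum_congr rfl fun m _ => integral_const_mul (w m) _
  have step3 : ∀ m ∈ t, ∫ ω, min (e m ω) Mr ∂P ≤ Mr * J P (e m) := by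
    intro m hm
    have : ∫ ω, min (e m ω) Mr ∂P ≤ ∫ ω, Mr * min 1 (e m ω) ∂P := by
      refine integral_mono_ae (hint_em m)
        ((integrable_min1 P (hem m) (he0 m)).const_mul Mr) ?_
      filter_upwards [he0 m] with ω h using pw2 hMr1 h
    rwa [integral_const_mul] at this
  have step4 : ∑ m ∈ t, w m * ∫ ω, min (e m ω) Mr ∂P ≤ ε / 2 := by
    have : ∀ m ∈ t, w m * ∫ ω, min (e m ω) Mr ∂P ≤ w m * (Mr * ε4) := by
      intro m hm
      have hJ : J P (e m) ≤ ε4 := by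
        have := hN m (le_trans hj (hwge m hm))
        rw [Real.dist_eq] at this
        calc J P (e m) ≤ |J P (e m) - 0| := by rw [sub_zero]; exact le_abs_self _
          _ ≤ ε4 := this.le
      refine mul_le_mul_of_nonneg_left ?_ (hw0 m hm)
      calc ∫ ω, min (e m ω) Mr ∂P ≤ Mr * J P (e m) := step3 m hm
        _ ≤ Mr * ε4 := mul_le_mul_of_nonneg_left hJ hMr0.le
    calc ∑ m ∈ t, w m * ∫ ω, min (e m ω) Mr ∂P ≤ ∑ m ∈ t, w m * (Mr * ε4) :=
          Finset.sum_le_sum this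
      _ = Mr * ε4 := by rw [← Finset.sum_mul, hw1, one_mul]
      _ ≤ ε / 2 := by
          have hMrne : Mr ≠ 0 := ne_of_gt hMr0
          have heq : Mr * ε4 = ε / 4 := by rw [hε4]; field_simp
          rw [heq]; linarith
  have hfinal : J P (b j) < ε := by
    have h2 : (∫ ω, min 1 (D ω / Mr) ∂P) < ε / 2 := hM
    linarith [step1, step2, step4]
  rw [Real.dist_eq, sub_zero, abs_of_nonneg (J_nonneg P (hb0 j))]
  exact hfinal

end S8

namespace S8
set_option linter.unusedSectionVars false
set_option linter.unusedVariables false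
set_option maxHeartbeats 1000000
open MeasureTheory Filter Set

/-- midpoint identity for `1 - exp(-t)` -/
lemma exp_mid_identity (p q : ℝ) :
    1 - Real.exp (-(2⁻¹ * p + 2⁻¹ * q)) =
      (1 - Real.exp (-p))/2 + (1 - Real.exp (-q))/2 +
        (Real.exp (-(p/2)) - Real.exp (-(q/2)))^2 / 2 := by
  have ha : Real.exp (-p) = Real.exp (-(p/2)) * Real.exp (-(p/2)) := by
    rw [← Real.exp_add]; ring_nf
  have hb : Real.exp (-q) = Real.exp (-(q/2)) * Real.exp (-(q/2)) := by
    rw [← Real.exp_add]; ring_nf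
  have hc : Real.exp (-(2⁻¹ * p + 2⁻¹ * q)) = Real.exp (-(p/2)) * Real.exp (-(q/2)) := by
    rw [← Real.exp_add]; ring_nf
  rw [ha, hb, hc]; ring

lemma exp_gap_lower {p q δ M : ℝ} (hpq : p ≤ q) (hgap : δ < q - p) (hpM : p ≤ M) :
    Real.exp (-(M/2)) * (1 - Real.exp (-(δ/2))) ≤
      Real.exp (-(p/2)) - Real.exp (-(q/2)) := by
  have h1 : Real.exp (-(q/2)) = Real.exp (-(p/2)) * Real.exp (-((q-p)/2)) := by
    rw [← Real.exp_add]; ring_nf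
  rw [h1]
  have h2 : Real.exp (-(p/2)) * (1 - Real.exp (-((q-p)/2)))
      ≥ Real.exp (-(M/2)) * (1 - Real.exp (-(δ/2))) := by
    have hexp1 : Real.exp (-(M/2)) ≤ Real.exp (-(p/2)) := Real.exp_le_exp.2 (by linarith)
    have hexp2 : Real.exp (-((q-p)/2)) ≤ Real.exp (-(δ/2)) := Real.exp_le_exp.2 (by linarith)
    have h3 : 0 ≤ 1 - Real.exp (-((q-p)/2)) := by
      have : Real.exp (-((q-p)/2)) ≤ 1 := Real.exp_le_one_iff.2 (by linarith)
      linarith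
    nlinarith [Real.exp_pos (-(M/2)), Real.exp_pos (-(p/2))]
  linarith [h2, mul_sub (Real.exp (-(p/2))) 1 (Real.exp (-((q-p)/2)))]

/-- pointwise Cauchy bound -/
lemma pw3 {p q δ M : ℝ} (hp : 0 ≤ p) (hq : 0 ≤ q) (hδ : 0 < δ) (hM : 0 < M) :
    min 1 |p - q| ≤ δ + min 1 (p/M) + min 1 (q/M) +
      (Real.exp M / (1 - Real.exp (-(δ/2)))^2) *
        (Real.exp (-(p/2)) - Real.exp (-(q/2)))^2 := by
  have hc : 0 < 1 - Real.exp (-(δ/2)) := by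
    have : Real.exp (-(δ/2)) < 1 := Real.exp_lt_one_iff.2 (by linarith)
    linarith
  have hK : 0 < Real.exp M / (1 - Real.exp (-(δ/2)))^2 := by positivity
  have hterm : 0 ≤ (Real.exp M / (1 - Real.exp (-(δ/2)))^2) *
      (Real.exp (-(p/2)) - Real.exp (-(q/2)))^2 := by positivity
  have hm1 : (0:ℝ) ≤ min 1 (p/M) := min1_nonneg (div_nonneg hp hM.le)
  have hm2 : (0:ℝ) ≤ min 1 (q/M) := min1_nonneg (div_nonneg hq hM.le)
  rcases le_or_gt |p - q| δ with hle | hgt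
  · have := min_le_right (1:ℝ) |p - q|
    linarith
  rcases le_or_gt p M with hpM | hpM
  swap
  · have h1 : min 1 (p/M) = 1 := min_eq_left (by rw [le_div_iff₀ hM]; linarith)
    have := min_le_left (1:ℝ) |p - q|
    linarith
  rcases le_or_gt q M with hqM | hqM
  swap
  · have h1 : min 1 (q/M) = 1 := min_eq_left (by rw [le_div_iff₀ hM]; linarith)
    have := min_le_left (1:ℝ) |p - q|
    linarith
  -- both below M and gap > δ
  · have hgap : Real.exp (-(M/2)) * (1 - Real.exp (-(δ/2))) ≤
        |Real.exp (-(p/2)) - Real.exp (-(q/2))| := by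
      rcases le_total p q with hpq | hpq
      · have h2 : δ < q - p := by rw [abs_sub_comm, abs_of_nonneg (by linarith)] at hgt; linarith
        have := exp_gap_lower hpq h2 hpM
        calc Real.exp (-(M/2)) * (1 - Real.exp (-(δ/2))) ≤
              Real.exp (-(p/2)) - Real.exp (-(q/2)) := this
          _ ≤ |Real.exp (-(p/2)) - Real.exp (-(q/2))| := le_abs_self _
      · have h2 : δ < p - q := by rw [abs_of_nonneg (by linarith)] at hgt; linarith
        have := exp_gap_lower hpq h2 hqM
        calc Real.exp (-(M/2)) * (1 - Real.exp (-(δ/2))) ≤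
              Real.exp (-(q/2)) - Real.exp (-(p/2)) := this
          _ ≤ |Real.exp (-(p/2)) - Real.exp (-(q/2))| := by
              rw [abs_sub_comm]; exact le_abs_self _
    have hsq : Real.exp (-M) * (1 - Real.exp (-(δ/2)))^2 ≤
        (Real.exp (-(p/2)) - Real.exp (-(q/2)))^2 := by
      have h3 : (Real.exp (-(M/2)) * (1 - Real.exp (-(δ/2))))^2 ≤
          |Real.exp (-(p/2)) - Real.exp (-(q/2))|^2 := by
        refine pow_le_pow_left₀ (by positivity) hgap 2
      rw [sq_abs] at h3
      calc Real.exp (-M) * (1 - Real.exp (-(δ/2)))^2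
          = (Real.exp (-(M/2)) * (1 - Real.exp (-(δ/2))))^2 := by
            rw [mul_pow]; congr 1; rw [sq, ← Real.exp_add]; ring_nf
        _ ≤ _ := h3
    have hone : 1 ≤ (Real.exp M / (1 - Real.exp (-(δ/2)))^2) *
        (Real.exp (-(p/2)) - Real.exp (-(q/2)))^2 := by
      have hcne : ((1 : ℝ) - Real.exp (-(δ/2))) ≠ 0 := ne_of_gt hc
      have hEE : Real.exp M * Real.exp (-M) = 1 := by rw [← Real.exp_add]; simp
      have h4 : (Real.exp M / (1 - Real.exp (-(δ/2)))^2) *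
          (Real.exp (-M) * (1 - Real.exp (-(δ/2)))^2) = 1 := by
        have : (Real.exp M / (1 - Real.exp (-(δ/2)))^2) *
            (Real.exp (-M) * (1 - Real.exp (-(δ/2)))^2) =
            (Real.exp M * Real.exp (-M)) *
              ((1 - Real.exp (-(δ/2)))^2 / (1 - Real.exp (-(δ/2)))^2) := by ring
        rw [this, hEE, div_self (pow_ne_zero 2 hcne), mul_one]
      calc (1:ℝ) = _ := h4.symm
        _ ≤ _ := by
          refine mul_le_mul_of_nonneg_left hsq hK.le
    have := min_le_left (1:ℝ) |p - q|
    linarith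

variable {Ω : Type*} [MeasurableSpace Ω] (P : Measure Ω) [IsProbabilityMeasure P]

/-- tail bound for the truncated first moment -/
lemma tailbound (v : Ω →ₘ[P] ℝ) (hv0 : 0 ≤ᵐ[P] ⇑v) {ℓ M : ℝ} (hℓ : 0 ≤ ℓ) (hM : 0 < M) :
    ∫ ω, min 1 (v ω / M) ∂P ≤ ℓ/M + (P {ω | ℓ < v ω}).toReal := by
  set v' := (v.aestronglyMeasurable).mk ⇑v with hv'def
  have heq : ⇑v =ᵐ[P] v' := (v.aestronglyMeasurable).ae_eq_mk
  have hv'm : StronglyMeasurable v' := (v.aestronglyMeasurable).stronglyMeasurable_mk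
  have hs : MeasurableSet {ω | ℓ < v' ω} := measurableSet_lt measurable_const hv'm.measurable
  have hptw : ∀ᵐ ω ∂P, min 1 (v ω / M) ≤
      ℓ/M + ({ω | ℓ < v' ω}).indicator (fun _ => (1:ℝ)) ω := by
    filter_upwards [heq] with ω hω
    rcases lt_or_ge ℓ (v' ω) with hlt | hge
    · have hmem : ω ∈ {ω | ℓ < v' ω} := hlt
      rw [Set.indicator_of_mem hmem]
      have h0 : (0:ℝ) ≤ ℓ/M := div_nonneg hℓ hM.le
      linarith [min_le_left (1:ℝ) (v ω / M)]
    · have hnm : ω ∉ {ω | ℓ < v' ω} := by simpa using hge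
      rw [Set.indicator_of_notMem hnm]
      have h1 : v ω / M ≤ ℓ/M := by
        rw [hω]; gcongr
      simpa using le_trans (min_le_right (1:ℝ) (v ω / M)) h1
  have hint1 : Integrable (fun ω => min 1 (v ω / M)) P :=
    integrable_min1 P ((continuous_id.div_const M).comp_aestronglyMeasurable
      v.aestronglyMeasurable)
      (by filter_upwards [hv0] with ω h using div_nonneg h hM.le)
  have hind : Integrable (({ω | ℓ < v' ω}).indicator fun _ => (1:ℝ)) P :=
    (integrable_const (1:ℝ)).indicator hs
  have hcalc : ∫ ω, min 1 (v ω / M) ∂P ≤ ℓ/M + (P {ω | ℓ < v' ω}).toReal := by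
    calc ∫ ω, min 1 (v ω / M) ∂P
        ≤ ∫ ω, (ℓ/M + ({ω | ℓ < v' ω}).indicator (fun _ => (1:ℝ)) ω) ∂P :=
          integral_mono_ae hint1 ((integrable_const _).add hind) hptw
      _ = ℓ/M + (P {ω | ℓ < v' ω}).toReal := by
          rw [integral_add (integrable_const _) hind, integral_const,
            integral_indicator_const (1:ℝ) hs]
          simp [measure_univ, measureReal_def]
  have hsets : {ω | ℓ < v' ω} =ᵐ[P] {ω | ℓ < v ω} := by
    filter_upwards [heq] with ω hω
    show (ℓ < v' ω) = (ℓ < (v : Ω → ℝ) ω)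
    rw [hω]
  rwa [measure_congr hsets] at hcalc

lemma coe_nonneg {v : Ω →ₘ[P] ℝ} (h : 0 ≤ v) : 0 ≤ᵐ[P] ⇑v := by
  have h1 := (MeasureTheory.AEEqFun.coeFn_le (f := (0 : Ω →ₘ[P] ℝ)) (g := v)).2 h
  filter_upwards [h1, MeasureTheory.AEEqFun.coeFn_zero (β := ℝ) (μ := P)] with ω ha hb
  calc (0:ℝ) = _ := hb.symm
    _ ≤ _ := ha

lemma aesm_exp_neg_half (v : Ω →ₘ[P] ℝ) :
    AEStronglyMeasurable (fun ω => Real.exp (-(v ω / 2))) P :=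
  (Real.continuous_exp.comp (continuous_id.div_const 2).neg).comp_aestronglyMeasurable
    v.aestronglyMeasurable

lemma U_integrable {v : Ω →ₘ[P] ℝ} (h : 0 ≤ᵐ[P] ⇑v) :
    Integrable (fun ω => 1 - Real.exp (-(v ω))) P := by
  refine (integrable_const (1:ℝ)).mono'
    ((continuous_const.sub (Real.continuous_exp.comp continuous_neg)).comp_aestronglyMeasurable
      v.aestronglyMeasurable) ?_
  filter_upwards [h] with ω hω
  simp only [Pi.zero_apply] at hω
  have h1 : Real.exp (-(v ω)) ≤ 1 := Real.exp_le_one_iff.2 (by linarith)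
  have h2 : 0 < Real.exp (-(v ω)) := Real.exp_pos _
  rw [Real.norm_eq_abs, abs_of_nonneg (by linarith)]
  linarith

lemma lemL2 (C : Set (Ω →ₘ[P] ℝ)) (hC0 : ∀ v ∈ C, 0 ≤ᵐ[P] ⇑v) (hconv : Convex ℝ C)
    (hbdd : Tendsto (fun ℓ : ℝ => ⨆ f ∈ C, P {ω | ℓ < f ω}) atTop (nhds 0))
    (x : ℕ → Ω →ₘ[P] ℝ) (hx : ∀ n, x n ∈ C) :
    ∃ y : ℕ → Ω →ₘ[P] ℝ, (∀ n, y n ∈ convexHull ℝ (x '' Ici n)) ∧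
      ∀ ε : ℝ, 0 < ε → ∃ N, ∀ m, N ≤ m → ∀ n, N ≤ n → dist0 P (y m) (y n) < ε := by
  classical
  set hull : ℕ → Set (Ω →ₘ[P] ℝ) := fun n => convexHull ℝ (x '' Ici n) with hhulldef
  have hsub : ∀ n, hull n ⊆ C := fun n => convexHull_min
    (by rintro z ⟨m, hm, rfl⟩; exact hx m) hconv
  have hmono : ∀ {m n : ℕ}, m ≤ n → hull n ⊆ hull m := fun {m n} h =>
    convexHull_mono (Set.image_mono (Ici_subset_Ici.2 h))
  have hxn : ∀ n, x n ∈ hull n := fun n =>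
    subset_convexHull ℝ _ ⟨n, mem_Ici.2 le_rfl, rfl⟩
  set Uf : (Ω →ₘ[P] ℝ) → ℝ := fun v => ∫ ω, (1 - Real.exp (-(v ω))) ∂P with hUfdef
  have hUle : ∀ v ∈ C, Uf v ≤ 1 := by
    intro v hv
    have h1 : Uf v ≤ ∫ _ω, (1:ℝ) ∂P := by
      refine integral_mono_ae (U_integrable P (hC0 v hv)) (integrable_const 1) ?_
      filter_upwards with ω
      have := Real.exp_pos (-(v ω)); linarith
    simpa [measure_univ] using h1
  have hU0 : ∀ v ∈ C, 0 ≤ Uf v := by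
    intro v hv
    refine integral_nonneg_of_ae ?_
    filter_upwards [hC0 v hv] with ω hω
    simp only [Pi.zero_apply] at hω ⊢
    have : Real.exp (-(v ω)) ≤ 1 := Real.exp_le_one_iff.2 (by linarith)
    linarith
  set s : ℕ → ℝ := fun n => sSup (Uf '' hull n) with hsdef
  have hne : ∀ n, (Uf '' hull n).Nonempty := fun n => ⟨_, mem_image_of_mem _ (hxn n)⟩
  have hbdda : ∀ n, BddAbove (Uf '' hull n) := fun n =>
    ⟨1, by rintro r ⟨v, hv, rfl⟩; exact hUle v (hsub n hv)⟩
  have hanti : Antitone s := fun m n h =>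
    csSup_le_csSup (hbdda m) (hne n) (image_mono (hmono h))
  have hsBelow : BddBelow (range s) := by
    refine ⟨0, ?_⟩
    rintro r ⟨n, rfl⟩
    exact le_trans (hU0 (x n) (hx n)) (le_csSup (hbdda n) (mem_image_of_mem Uf (hxn n)))
  have hstend : Tendsto s atTop (nhds (⨅ n, s n)) := tendsto_atTop_ciInf hanti hsBelow
  set sI : ℝ := ⨅ n, s n with hsIdef
  have hsge : ∀ n, sI ≤ s n := fun n => ciInf_le hsBelow n
  have hychoice : ∀ n : ℕ, ∃ z ∈ hull n, s n - 1/((n:ℝ)+1) < Uf z := by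
    intro n
    have hlt : s n - 1/((n:ℝ)+1) < s n := by
      have : (0:ℝ) < 1/((n:ℝ)+1) := by positivity
      linarith
    obtain ⟨r, ⟨z, hz, rfl⟩, hr⟩ := exists_lt_of_lt_csSup (hne n) hlt
    exact ⟨z, hz, hr⟩
  choose y hy1 hy2 using hychoice
  refine ⟨y, hy1, ?_⟩
  intro ε hε
  -- parameters
  have h16 : (0:ℝ) < ε/16 := by linarith
  have hobb := (ENNReal.tendsto_nhds_zero.mp hbdd) (ENNReal.ofReal (ε/16))
    (by simpa using ENNReal.ofReal_pos.2 h16)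
  obtain ⟨ℓ, hℓall⟩ := (hobb.and (eventually_ge_atTop (0:ℝ))).exists
  obtain ⟨hℓ1, hℓ0⟩ := hℓall
  have hCP : ∀ v ∈ C, (P {ω | ℓ < v ω}).toReal ≤ ε/16 := by
    intro v hv
    have h1 : P {ω | ℓ < v ω} ≤ ⨆ f ∈ C, P {ω | ℓ < f ω} :=
      le_biSup (fun f => P {ω | ℓ < f ω}) hv
    exact ENNReal.toReal_le_of_le_ofReal h16.le (le_trans h1 hℓ1)
  set M : ℝ := max 1 (16*ℓ/ε) with hMdef
  have hM1 : 1 ≤ M := le_max_left _ _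
  have hM0 : (0:ℝ) < M := lt_of_lt_of_le one_pos hM1
  have hℓM : ℓ/M ≤ ε/16 := by
    rw [div_le_iff₀ hM0]
    have h2 : 16*ℓ/ε ≤ M := le_max_right _ _
    rw [div_le_iff₀ hε] at h2
    nlinarith
  set δ : ℝ := ε/4 with hδdef
  have hδ : 0 < δ := by positivity
  have hc : 0 < 1 - Real.exp (-(δ/2)) := by
    have : Real.exp (-(δ/2)) < 1 := Real.exp_lt_one_iff.2 (by linarith)
    linarith
  set K : ℝ := Real.exp M / (1 - Real.exp (-(δ/2)))^2 with hKdef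
  have hK : 0 < K := by positivity
  set η : ℝ := ε/(16*K) with hηdef
  have hη : 0 < η := by positivity
  have hev1 : ∀ᶠ n in atTop, s n < sI + η :=
    hstend.eventually (gt_mem_nhds (lt_add_of_pos_right sI hη))
  have h1n : Tendsto (fun n:ℕ => 1/((n:ℝ)+1)) atTop (nhds 0) :=
    tendsto_one_div_add_atTop_nhds_zero_nat
  have hev2 : ∀ᶠ n : ℕ in atTop, 1/((n:ℝ)+1) < η := h1n.eventually (gt_mem_nhds hη)
  obtain ⟨N, hN⟩ := eventually_atTop.mp (hev1.and hev2)
  refine ⟨N, ?_⟩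
  intro m hm n hn
  have hymC : y m ∈ C := hsub m (hy1 m)
  have hynC : y n ∈ C := hsub n (hy1 n)
  have hym0 : 0 ≤ᵐ[P] ⇑(y m) := hC0 _ hymC
  have hyn0 : 0 ≤ᵐ[P] ⇑(y n) := hC0 _ hynC
  -- midpoint
  set z : Ω →ₘ[P] ℝ := (2⁻¹ : ℝ) • y m + (2⁻¹ : ℝ) • y n with hzdef
  have hzhull : z ∈ hull (min m n) := by
    refine (convex_convexHull ℝ _) (hmono (min_le_left m n) (hy1 m))
      (hmono (min_le_right m n) (hy1 n)) (by norm_num) (by norm_num) (by norm_num)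
  have hzC : z ∈ C := hsub _ hzhull
  have hzco : ⇑z =ᵐ[P] fun ω => 2⁻¹ * (y m) ω + 2⁻¹ * (y n) ω := by
    filter_upwards [MeasureTheory.AEEqFun.coeFn_add ((2⁻¹:ℝ) • y m) ((2⁻¹:ℝ) • y n),
      MeasureTheory.AEEqFun.coeFn_smul (2⁻¹:ℝ) (y m),
      MeasureTheory.AEEqFun.coeFn_smul (2⁻¹:ℝ) (y n)] with ω h1 h2 h3
    rw [hzdef, h1]
    simp only [Pi.add_apply, h2, h3, Pi.smul_apply, smul_eq_mul]
  -- the square term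
  set Sfun : Ω → ℝ := fun ω =>
    (Real.exp (-((y m) ω/2)) - Real.exp (-((y n) ω/2)))^2 with hSdef
  have hSm : AEStronglyMeasurable Sfun P :=
    (continuous_pow 2).comp_aestronglyMeasurable
      ((aesm_exp_neg_half P (y m)).sub (aesm_exp_neg_half P (y n)))
  have hSint : Integrable Sfun P := by
    refine (integrable_const (1:ℝ)).mono' hSm ?_
    filter_upwards [hym0, hyn0] with ω h1 h2
    simp only [Pi.zero_apply] at h1 h2
    have ha1 : Real.exp (-((y m) ω/2)) ≤ 1 := Real.exp_le_one_iff.2 (by linarith)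
    have ha2 : Real.exp (-((y n) ω/2)) ≤ 1 := Real.exp_le_one_iff.2 (by linarith)
    have hb1 : 0 < Real.exp (-((y m) ω/2)) := Real.exp_pos _
    have hb2 : 0 < Real.exp (-((y n) ω/2)) := Real.exp_pos _
    rw [Real.norm_eq_abs, abs_of_nonneg (sq_nonneg _)]
    simp only [hSdef]
    nlinarith
  have hFm_int : Integrable (fun ω => 1 - Real.exp (-((y m) ω))) P := U_integrable P hym0
  have hFn_int : Integrable (fun ω => 1 - Real.exp (-((y n) ω))) P := U_integrable P hyn0
  have hUz : Uf z = (∫ ω, (1 - Real.exp (-((y m) ω))) ∂P)/2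
      + (∫ ω, (1 - Real.exp (-((y n) ω))) ∂P)/2 + (∫ ω, Sfun ω ∂P)/2 := by
    have hcongr : Uf z = ∫ ω, ((1 - Real.exp (-((y m) ω)))/2
        + (1 - Real.exp (-((y n) ω)))/2 + Sfun ω/2) ∂P := by
      refine integral_congr_ae ?_
      filter_upwards [hzco] with ω hω
      rw [hω]
      exact exp_mid_identity ((y m) ω) ((y n) ω)
    have hFm2 : Integrable (fun ω => (1 - Real.exp (-((y m) ω)))/2) P :=
      hFm_int.div_const 2
    have hFn2 : Integrable (fun ω => (1 - Real.exp (-((y n) ω)))/2) P :=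
      hFn_int.div_const 2
    have hAB : Integrable (fun ω => (1 - Real.exp (-((y m) ω)))/2
        + (1 - Real.exp (-((y n) ω)))/2) P := hFm2.add hFn2
    rw [hcongr, integral_add hAB (hSint.div_const 2), integral_add hFm2 hFn2,
      integral_div, integral_div, integral_div]
  have hSbound : ∫ ω, Sfun ω ∂P ≤ 4*η := by
    have h1 : Uf z ≤ s (min m n) := le_csSup (hbdda _) ⟨z, hzhull, rfl⟩
    have h2 : s (min m n) < sI + η := (hN (min m n) (le_min hm hn)).1
    have h3 : sI - η < Uf (y m) := by
      have := hy2 m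
      have h4 := (hN m hm).2
      have h5 := hsge m
      linarith
    have h3' : sI - η < Uf (y n) := by
      have := hy2 n
      have h4 := (hN n hn).2
      have h5 := hsge n
      linarith
    have hUfym : Uf (y m) = ∫ ω, (1 - Real.exp (-((y m) ω))) ∂P := rfl
    have hUfyn : Uf (y n) = ∫ ω, (1 - Real.exp (-((y n) ω))) ∂P := rfl
    rw [hUfym, hUfyn] at *
    linarith [hUz]
  -- tail bounds
  have hmin_int : ∀ (v : Ω →ₘ[P] ℝ), 0 ≤ᵐ[P] ⇑v →
      Integrable (fun ω => min 1 (v ω / M)) P := fun v hv =>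
    integrable_min1 P ((continuous_id.div_const M).comp_aestronglyMeasurable
      v.aestronglyMeasurable)
      (by filter_upwards [hv] with ω h using div_nonneg h hM0.le)
  have htail : ∀ v ∈ C, ∫ ω, min 1 (v ω / M) ∂P ≤ ε/8 := by
    intro v hv
    calc ∫ ω, min 1 (v ω / M) ∂P ≤ ℓ/M + (P {ω | ℓ < v ω}).toReal :=
          tailbound P v (hC0 v hv) hℓ0 hM0
      _ ≤ ε/16 + ε/16 := add_le_add hℓM (hCP v hv)
      _ = ε/8 := by ring
  -- the key pointwise estimate integrated
  have hkey : dist0 P (y m) (y n) ≤ δ + (∫ ω, min 1 ((y m) ω / M) ∂P)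
      + (∫ ω, min 1 ((y n) ω / M) ∂P) + K * ∫ ω, Sfun ω ∂P := by
    have hrhs1 : Integrable (fun ω => δ + min 1 ((y m) ω / M)
        + min 1 ((y n) ω / M) + K * Sfun ω) P :=
      (((integrable_const δ).add (hmin_int _ hym0)).add (hmin_int _ hyn0)).add
        (hSint.const_mul K)
    have hmono2 : dist0 P (y m) (y n) ≤ ∫ ω, (δ + min 1 ((y m) ω / M)
        + min 1 ((y n) ω / M) + K * Sfun ω) ∂P := by
      refine integral_mono_ae (integrable_d P (y m) (y n)) hrhs1 ?_
      filter_upwards [hym0, hyn0] with ω h1 h2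
      have := pw3 (p := (y m) ω) (q := (y n) ω) h1 h2 hδ hM0
      simpa [hKdef, hSdef] using this
    calc dist0 P (y m) (y n) ≤ _ := hmono2
      _ = δ + (∫ ω, min 1 ((y m) ω / M) ∂P) + (∫ ω, min 1 ((y n) ω / M) ∂P)
          + K * ∫ ω, Sfun ω ∂P := by
        have hI1 : Integrable (fun ω => δ + min 1 ((y m) ω / M)) P :=
          (integrable_const δ).add (hmin_int _ hym0)
        have hI2 : Integrable (fun ω => δ + min 1 ((y m) ω / M)
            + min 1 ((y n) ω / M)) P := hI1.add (hmin_int _ hyn0)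
        have hKS2 : Integrable (fun ω => K * Sfun ω) P := hSint.const_mul K
        rw [integral_add hI2 hKS2, integral_add hI1 (hmin_int _ hyn0),
          integral_add (integrable_const δ) (hmin_int _ hym0),
          integral_const, integral_const_mul]
        simp [measure_univ]
  have hKS : K * ∫ ω, Sfun ω ∂P ≤ ε/4 := by
    have h1 : K * ∫ ω, Sfun ω ∂P ≤ K * (4*η) :=
      mul_le_mul_of_nonneg_left hSbound hK.le
    have h2 : K * (4*η) = ε/4 := by
      rw [hηdef]; field_simp; ring
    linarith
  calc dist0 P (y m) (y n) ≤ _ := hkey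
    _ ≤ δ + ε/8 + ε/8 + ε/4 := by
      have t1 := htail _ hymC
      have t2 := htail _ hynC
      linarith
    _ < ε := by rw [hδdef]; linarith


lemma lemL3 (y : ℕ → Ω →ₘ[P] ℝ)
    (hcau : ∀ ε : ℝ, 0 < ε → ∃ N, ∀ m, N ≤ m → ∀ n, N ≤ n → dist0 P (y m) (y n) < ε) :
    ∃ H : Ω →ₘ[P] ℝ, Tendsto (fun n => dist0 P (y n) H) atTop (nhds 0) := by
  classical
  have hpow : ∀ k : ℕ, (0:ℝ) < (1/2)^k := fun k => by positivity
  choose N hNspec using fun k : ℕ => hcau ((1/2)^k) (hpow k)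
  -- a strictly increasing subsequence
  let φ : ℕ → ℕ := fun k => Nat.rec (N 0) (fun k ih => max (N (k+1)) ih + 1) k
  have hφsucc : ∀ k, φ (k+1) = max (N (k+1)) (φ k) + 1 := fun k => rfl
  have hφmono : StrictMono φ := strictMono_nat_of_lt_succ (fun k => by
    rw [hφsucc]; exact lt_of_le_of_lt (le_max_right _ _) (lt_add_one _))
  have hφN : ∀ k, N k ≤ φ k := by
    intro k
    cases k with
    | zero => exact le_rfl
    | succ k => rw [hφsucc]; exact le_trans (le_max_left _ _) (le_of_lt (lt_add_one _))
  have hstep : ∀ k, dist0 P (y (φ (k+1))) (y (φ k)) < (1/2)^k := by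
    intro k
    refine hNspec k _ ?_ _ (hφN k)
    calc N k ≤ φ k := hφN k
      _ ≤ φ (k+1) := (hφmono (lt_add_one k)).le
  -- increments
  set d : ℕ → Ω → ℝ := fun k ω => |y (φ (k+1)) ω - y (φ k) ω| with hddef
  have hd_aesm : ∀ k, AEStronglyMeasurable (d k) P := fun k =>
    continuous_abs.comp_aestronglyMeasurable
      ((y (φ (k+1))).aestronglyMeasurable.sub (y (φ k)).aestronglyMeasurable)
  have hd0 : ∀ k ω, 0 ≤ d k ω := fun k ω => abs_nonneg _
  -- lintegral summability
  have hlin : ∀ k, ∫⁻ ω, ENNReal.ofReal (min 1 (d k ω)) ∂P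
      = ENNReal.ofReal (dist0 P (y (φ (k+1))) (y (φ k))) := by
    intro k
    rw [show dist0 P (y (φ (k+1))) (y (φ k)) = ∫ ω, min 1 (d k ω) ∂P from rfl]
    exact (MeasureTheory.ofReal_integral_eq_lintegral_ofReal
      (integrable_min1 P (hd_aesm k) (Eventually.of_forall (hd0 k)))
      (Eventually.of_forall (fun ω => min1_nonneg (hd0 k ω)))).symm
  have hae_sum : ∀ᵐ ω ∂P, Summable (fun k => min 1 (d k ω)) := by
    have haem : ∀ k, AEMeasurable (fun ω => ENNReal.ofReal (min 1 (d k ω))) P := fun k =>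
      ENNReal.measurable_ofReal.comp_aemeasurable (aesm_min1 P (hd_aesm k)).aemeasurable
    have hswap : ∫⁻ ω, (∑' k, ENNReal.ofReal (min 1 (d k ω))) ∂P
        = ∑' k, ∫⁻ ω, ENNReal.ofReal (min 1 (d k ω)) ∂P := lintegral_tsum haem
    have hsum_ne : (∑' k, ∫⁻ ω, ENNReal.ofReal (min 1 (d k ω)) ∂P) ≠ ⊤ := by
      have hle : ∀ k, ∫⁻ ω, ENNReal.ofReal (min 1 (d k ω)) ∂P
          ≤ ENNReal.ofReal ((1/2)^k) := by
        intro k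
        rw [hlin k]
        exact ENNReal.ofReal_le_ofReal (hstep k).le
      have h1 : (∑' k, ∫⁻ ω, ENNReal.ofReal (min 1 (d k ω)) ∂P)
          ≤ ∑' k : ℕ, ENNReal.ofReal ((1/2)^k) := ENNReal.tsum_le_tsum hle
      have h2 : (∑' k : ℕ, ENNReal.ofReal ((1/2:ℝ)^k)) =
          ENNReal.ofReal (∑' k : ℕ, (1/2:ℝ)^k) :=
        (ENNReal.ofReal_tsum_of_nonneg (fun k => (hpow k).le) summable_geometric_two).symm
      exact ne_top_of_le_ne_top (by rw [h2]; exact ENNReal.ofReal_ne_top) h1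
    have hfin : ∀ᵐ ω ∂P, (∑' k, ENNReal.ofReal (min 1 (d k ω))) < ⊤ := by
      refine ae_lt_top' (AEMeasurable.ennreal_tsum haem) ?_
      rw [hswap]; exact hsum_ne
    filter_upwards [hfin] with ω hω
    have h3 : (∑' k, (Real.toNNReal (min 1 (d k ω)) : ENNReal)) ≠ ⊤ := hω.ne
    have h4 : Summable (fun k => Real.toNNReal (min 1 (d k ω))) :=
      ENNReal.tsum_coe_ne_top_iff_summable.1 h3
    have h5 : Summable (fun k => ((Real.toNNReal (min 1 (d k ω))) : ℝ)) :=
      NNReal.summable_coe.2 h4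
    refine h5.congr fun k => ?_
    rw [Real.coe_toNNReal _ (min1_nonneg (hd0 k ω))]
  -- a.e. convergence of the subsequence
  have haeconv : ∀ᵐ ω ∂P, ∃ L : ℝ, Tendsto (fun k => y (φ k) ω) atTop (nhds L) := by
    filter_upwards [hae_sum] with ω hω
    have hterm : Tendsto (fun k => min 1 (d k ω)) atTop (nhds 0) := hω.tendsto_atTop_zero
    obtain ⟨K, hK⟩ := eventually_atTop.mp (hterm.eventually (gt_mem_nhds one_pos))
    have hdlt : ∀ k, K ≤ k → d k ω < 1 := by
      intro k hk
      by_contra hcon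
      push_neg at hcon
      have := hK k hk
      rw [min_eq_left hcon] at this
      exact lt_irrefl _ this
    have hsum2 : Summable (fun k => d (k + K) ω) := by
      have := (summable_nat_add_iff K).2 hω
      refine this.congr fun k => ?_
      rw [min_eq_right (hdlt (k + K) (Nat.le_add_left K k)).le]
    have hsumd : Summable (fun k => d k ω) := (summable_nat_add_iff K).1 hsum2
    have hcs : CauchySeq (fun k => y (φ k) ω) := by
      refine cauchySeq_of_summable_dist ?_
      refine hsumd.congr fun k => ?_
      rw [Real.dist_eq, hddef]
      simp [abs_sub_comm]
    exact cauchySeq_tendsto_of_complete hcs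
  -- the limit function
  set G : Ω → ℝ := fun ω => limUnder atTop (fun k => y (φ k) ω) with hGdef
  have haeG : ∀ᵐ ω ∂P, Tendsto (fun k => y (φ k) ω) atTop (nhds (G ω)) := by
    filter_upwards [haeconv] with ω hω
    obtain ⟨L, hL⟩ := hω
    rw [hGdef]
    simpa [hL.limUnder_eq] using hL
  have hGm : AEMeasurable G P :=
    aemeasurable_of_tendsto_metrizable_ae'
      (fun k => (y (φ k)).aestronglyMeasurable.aemeasurable) haeG
  set H : Ω →ₘ[P] ℝ := MeasureTheory.AEEqFun.mk G hGm.aestronglyMeasurable with hHdef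
  have hHco : ⇑H =ᵐ[P] G := MeasureTheory.AEEqFun.coeFn_mk _ _
  -- the subsequence converges to H in dist0
  have hsubconv : Tendsto (fun k => dist0 P (y (φ k)) H) atTop (nhds 0) := by
    have h0 : (0:ℝ) = ∫ _ω, (0:ℝ) ∂P := by simp
    rw [h0]
    refine tendsto_integral_of_dominated_convergence (fun _ => (1:ℝ))
      (fun k => (integrable_d P (y (φ k)) H).1) (integrable_const 1) ?_ ?_
    · intro k
      filter_upwards with ω
      rw [Real.norm_eq_abs, abs_of_nonneg (min1_nonneg (abs_nonneg _))]
      exact min_le_left _ _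
    · filter_upwards [haeG, hHco] with ω h1 h2
      have h3 : Tendsto (fun k => y (φ k) ω - H ω) atTop (nhds 0) := by
        rw [h2]
        simpa using h1.sub_const (G ω)
      have hcont : Continuous (fun x : ℝ => min 1 |x|) :=
        continuous_const.min continuous_abs
      have := (hcont.tendsto 0).comp h3
      simpa [Function.comp_def] using this
  -- conclude for the full sequence
  refine ⟨H, ?_⟩
  rw [Metric.tendsto_atTop]
  intro ε hε
  obtain ⟨N', hN'⟩ := hcau (ε/2) (half_pos hε)
  obtain ⟨k₀, hk₀⟩ := eventually_atTop.mp (hsubconv.eventually (gt_mem_nhds (half_pos hε)))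
  set k := max k₀ N' with hkdef
  have hφk : N' ≤ φ k := le_trans (le_max_right _ _) (le_trans (hφmono.le_apply) le_rfl)
  refine ⟨N', fun n hn => ?_⟩
  rw [Real.dist_eq, sub_zero, abs_of_nonneg (dist0_nonneg P _ _)]
  calc dist0 P (y n) H ≤ dist0 P (y n) (y (φ k)) + dist0 P (y (φ k)) H :=
        dist0_triangle P _ _ _
    _ < ε/2 + ε/2 := by
        have h1 := hN' n hn (φ k) hφk
        have h2 := hk₀ k (le_max_left _ _)
        linarith
    _ = ε := by ring


lemma pos_part_eq (dv : ℝ) : max dv 0 = dv + max (-dv) 0 := by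
  rcases le_total 0 dv with h | h
  · rw [max_eq_left h, max_eq_right (by linarith)]; ring
  · rw [max_eq_right h, max_eq_left (by linarith)]; ring

lemma posneg_abs (dv : ℝ) : max dv 0 + max (-dv) 0 = |dv| := by
  rcases le_total 0 dv with h | h
  · rw [max_eq_left h, max_eq_right (by linarith), abs_of_nonneg h]; ring
  · rw [max_eq_right h, max_eq_left (by linarith), abs_of_nonpos h]; ring

lemma pos_part_sum_le (t : Finset ℕ) (w : ℕ → ℝ) (hw0 : ∀ m ∈ t, 0 ≤ w m)
    (hw1 : ∑ m ∈ t, w m = 1) (av : ℕ → ℝ) (gv : ℝ) :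
    max (gv - ∑ m ∈ t, w m * av m) 0 ≤ ∑ m ∈ t, w m * max (gv - av m) 0 := by
  have h1 : ∑ m ∈ t, w m * (gv - av m) = gv - ∑ m ∈ t, w m * av m := by
    simp only [mul_sub]
    rw [Finset.sum_sub_distrib, ← Finset.sum_mul, hw1, one_mul]
  refine max_le ?_ (Finset.sum_nonneg fun m hm =>
    mul_nonneg (hw0 m hm) (le_max_right _ _))
  rw [← h1]
  exact Finset.sum_le_sum fun m hm =>
    mul_le_mul_of_nonneg_left (le_max_left _ _) (hw0 m hm)

lemma pw_jensen (t : Finset ℕ) (w : ℕ → ℝ) (hw0 : ∀ m ∈ t, 0 ≤ w m)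
    (hw1 : ∑ m ∈ t, w m = 1) (av : ℕ → ℝ) (hav : ∀ m ∈ t, 0 ≤ av m) :
    ∑ m ∈ t, w m * min 1 (av m) ≤ min 1 (∑ m ∈ t, w m * av m) := by
  rcases le_or_gt 1 (∑ m ∈ t, w m * av m) with hcase | hcase
  · rw [min_eq_left hcase]
    calc ∑ m ∈ t, w m * min 1 (av m) ≤ ∑ m ∈ t, w m * 1 :=
          Finset.sum_le_sum fun m hm =>
            mul_le_mul_of_nonneg_left (min_le_left _ _) (hw0 m hm)
      _ = 1 := by simp [hw1]
  · rw [min_eq_right hcase.le]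
    exact Finset.sum_le_sum fun m hm =>
      mul_le_mul_of_nonneg_left (min_le_right _ _) (hw0 m hm)

lemma J_le_J_add_J {a b c : Ω → ℝ} (ham : AEStronglyMeasurable a P)
    (hbm : AEStronglyMeasurable b P) (hcm : AEStronglyMeasurable c P)
    (ha0 : 0 ≤ᵐ[P] a) (hb0 : 0 ≤ᵐ[P] b) (hc0 : 0 ≤ᵐ[P] c)
    (hle : a ≤ᵐ[P] fun ω => b ω + c ω) : J P a ≤ J P b + J P c := by
  have hib := integrable_min1 P hbm hb0
  have hic := integrable_min1 P hcm hc0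
  calc J P a ≤ ∫ ω, (min 1 (b ω) + min 1 (c ω)) ∂P := by
        refine integral_mono_ae (integrable_min1 P ham ha0) (hib.add hic) ?_
        filter_upwards [hle, hb0, hc0] with ω h1 h2 h3
        simp only [Pi.zero_apply] at h2 h3
        calc min 1 (a ω) ≤ min 1 (b ω + c ω) := min_le_min le_rfl h1
          _ ≤ min 1 (b ω) + min 1 (c ω) := min1_subadd h2 h3
    _ = J P b + J P c := integral_add hib hic

end S8

end S8sec

/-- Let `C ⊆ L⁰₊` be convexly compact and `(f n)` a `C`-valued sequence
converging in probability to `g ∈ C^max`. Then every sequence of forward convex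
combinations of `(f n)` also converges in probability to `g`. -/
theorem statement8 {Ω : Type*} [MeasurableSpace Ω] (P : Measure Ω) [IsProbabilityMeasure P]
    (C : Set (Ω →ₘ[P] ℝ)) (hCL0 : C ⊆ L0plus P)
    (hconv : Convex ℝ C) (hcl : IsClosed0 P C) (hbdd : Bounded0 P C)
    (f : ℕ → Ω →ₘ[P] ℝ) (hf : ∀ n, f n ∈ C)
    (g : Ω →ₘ[P] ℝ) (hg : g ∈ maxSet P C) (hconvg : Tendsto0 P f g)
    (h : ℕ → Ω →ₘ[P] ℝ) (hfcc : ForwardConvexComb P f h) :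
    Tendsto0 P h g := by
  classical
  open S8 in
  by_contra hcon
  -- basic memberships and nonnegativity
  have hg0 : 0 ≤ᵐ[P] ⇑g := S8.coe_nonneg P (hCL0 hg.1)
  have hf0 : ∀ n, 0 ≤ᵐ[P] ⇑(f n) := fun n => S8.coe_nonneg P (hCL0 (hf n))
  have hhC : ∀ n, h n ∈ C := fun n =>
    (convexHull_min (by rintro z ⟨m, hm, rfl⟩; exact hf m) hconv) (hfcc n)
  have hh0 : ∀ n, 0 ≤ᵐ[P] ⇑(h n) := fun n => S8.coe_nonneg P (hCL0 (hhC n))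
  have haesm_pp : ∀ u v : Ω →ₘ[P] ℝ,
      AEStronglyMeasurable (fun ω => max (u ω - v ω) 0) P := fun u v =>
    (continuous_id.max continuous_const).comp_aestronglyMeasurable
      (u.aestronglyMeasurable.sub v.aestronglyMeasurable)
  have hpp0 : ∀ (u v : Ω →ₘ[P] ℝ), 0 ≤ᵐ[P] fun ω => max (u ω - v ω) 0 := fun u v =>
    Eventually.of_forall fun ω => le_max_right _ _
  -- Step 1 : J (g - h n)⁺ → 0
  have hstar : Tendsto (fun n => S8.J P (fun ω => max (g ω - h n ω) 0)) atTop (nhds 0) := by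
    refine S8.lemC P ⇑g g.aestronglyMeasurable hg0
      (fun i ω => max (g ω - f i ω) 0) (fun i => haesm_pp g (f i))
      (fun i => hpp0 g (f i)) ?_ ?_
      (fun n ω => max (g ω - h n ω) 0) (fun n => haesm_pp g (h n))
      (fun n => hpp0 g (h n)) ?_
    · intro i
      filter_upwards [hg0, hf0 i] with ω h1 h2
      simp only [Pi.zero_apply] at h1 h2
      exact max_le (by linarith) h1
    · refine squeeze_zero (fun i => S8.J_nonneg P (hpp0 g (f i))) (fun i => ?_) hconvg
      refine S8.J_mono P (haesm_pp g (f i)) (S8.aesm_abs_sub P (f i) g)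
        (hpp0 g (f i)) (Eventually.of_forall fun ω => ?_)
      beta_reduce
      rw [abs_sub_comm]
      exact max_le (le_abs_self _) (abs_nonneg _)
    · intro n
      obtain ⟨t, w, hw0, hw1, hge, hco⟩ := rep_of_mem_hull P (hfcc n)
      refine ⟨t, w, hw0, hw1, hge, ?_⟩
      filter_upwards [hco] with ω hω
      calc max (g ω - h n ω) 0 = max (g ω - ∑ m ∈ t, w m * f m ω) 0 := by rw [hω]
        _ ≤ ∑ m ∈ t, w m * max (g ω - f m ω) 0 :=
            S8.pos_part_sum_le t w hw0 hw1 _ _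
  -- get a bad subsequence
  have hchar : ∃ ε > 0, ∃ᶠ n in atTop, ε ≤ dist0 P (h n) g := by
    by_contra h2
    push_neg at h2
    apply hcon
    show Tendsto (fun n => dist0 P (h n) g) atTop (nhds 0)
    rw [Metric.tendsto_atTop]
    intro ε hε
    have h3 := h2 (ε/2) (half_pos hε)
    obtain ⟨N, hN⟩ := eventually_atTop.mp h3
    refine ⟨N, fun n hn => ?_⟩
    rw [Real.dist_eq, sub_zero, abs_of_nonneg (S8.dist0_nonneg P _ _)]
    have h4 := hN n hn
    linarith
  obtain ⟨ε, hε, hfreq⟩ := hchar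
  have hev4 : ∀ᶠ n in atTop, S8.J P (fun ω => max (g ω - h n ω) 0) < ε/4 :=
    hstar.eventually (gt_mem_nhds (by positivity))
  obtain ⟨φ, hφmono, hφ⟩ := extraction_of_frequently_atTop (hfreq.and_eventually hev4)
  set av : ℕ → Ω → ℝ := fun k ω => max (h (φ k) ω - g ω) 0 with havdef
  set cv : ℕ → Ω → ℝ := fun k ω => max (g ω - h (φ k) ω) 0 with hcvdef
  have hav_aesm : ∀ k, AEStronglyMeasurable (av k) P := fun k => haesm_pp (h (φ k)) g
  have hcv_aesm : ∀ k, AEStronglyMeasurable (cv k) P := fun k => haesm_pp g (h (φ k))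
  have hav0 : ∀ k, 0 ≤ᵐ[P] av k := fun k => hpp0 (h (φ k)) g
  have hcv0 : ∀ k, 0 ≤ᵐ[P] cv k := fun k => hpp0 g (h (φ k))
  have hcvg_le : ∀ k, cv k ≤ᵐ[P] ⇑g := by
    intro k
    filter_upwards [hg0, hh0 (φ k)] with ω h1 h2
    simp only [Pi.zero_apply] at h1 h2
    exact max_le (by linarith) h1
  -- lower bound for the excess of the bad subsequence
  have hlow : ∀ k, 3*ε/4 ≤ S8.J P (av k) := by
    intro k
    have h1 : dist0 P (h (φ k)) g ≤ S8.J P (av k) + S8.J P (cv k) := by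
      rw [S8.dist0_eq_J]
      refine S8.J_le_J_add_J P (S8.aesm_abs_sub P (h (φ k)) g) (hav_aesm k) (hcv_aesm k)
        (Eventually.of_forall fun ω => abs_nonneg _) (hav0 k) (hcv0 k)
        (Eventually.of_forall fun ω => ?_)
      have habs := S8.posneg_abs (h (φ k) ω - g ω)
      have hns : -(h (φ k) ω - g ω) = g ω - h (φ k) ω := by ring
      rw [hns] at habs
      beta_reduce
      rw [← habs]
    have h2 := (hφ k).1
    have h3 := (hφ k).2
    linarith
  -- Cauchy forward convex combinations of the bad subsequence
  obtain ⟨y, hy1, hycau⟩ := S8.lemL2 P C (fun v hv => S8.coe_nonneg P (hCL0 hv)) hconv hbdd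
    (fun k => h (φ k)) (fun k => hhC (φ k))
  obtain ⟨H, hyH⟩ := S8.lemL3 P y hycau
  have hyC : ∀ j, y j ∈ C := fun j =>
    (convexHull_min (by rintro z ⟨m, hm, rfl⟩; exact hhC (φ m)) hconv) (hy1 j)
  have hy0 : ∀ j, 0 ≤ᵐ[P] ⇑(y j) := fun j => S8.coe_nonneg P (hCL0 (hyC j))
  have hHC : H ∈ C := by
    apply hcl
    intro ε' hε'
    obtain ⟨N1, hN1⟩ := eventually_atTop.mp (hyH.eventually (gt_mem_nhds hε'))
    exact ⟨y N1, hyC N1, by rw [S8.dist0_comm]; exact hN1 N1 le_rfl⟩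
  -- representation of the y's
  have hrep : ∀ j, ∃ (t : Finset ℕ) (w : ℕ → ℝ), (∀ m ∈ t, 0 ≤ w m) ∧
      (∑ m ∈ t, w m = 1) ∧ (∀ m ∈ t, j ≤ m) ∧
      ⇑(y j) =ᵐ[P] fun ω => ∑ m ∈ t, w m * h (φ m) ω := fun j =>
    rep_of_mem_hull P (hy1 j)
  choose T W hW0 hW1 hWge hYco using hrep
  -- the combined defect and excess
  set Cf : ℕ → Ω → ℝ := fun j ω => ∑ m ∈ T j, W j m * cv m ω with hCfdef
  set Af : ℕ → Ω → ℝ := fun j ω => ∑ m ∈ T j, W j m * av m ω with hAfdef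
  have hCf_aesm : ∀ j, AEStronglyMeasurable (Cf j) P := fun j =>
    Finset.aestronglyMeasurable_fun_sum _ fun m _ => (hcv_aesm m).const_mul _
  have hAf_aesm : ∀ j, AEStronglyMeasurable (Af j) P := fun j =>
    Finset.aestronglyMeasurable_fun_sum _ fun m _ => (hav_aesm m).const_mul _
  have hCf0 : ∀ j, 0 ≤ᵐ[P] Cf j := fun j => Eventually.of_forall fun ω =>
    Finset.sum_nonneg fun m hm => mul_nonneg (hW0 j m hm) (le_max_right _ _)
  have hAf0 : ∀ j, 0 ≤ᵐ[P] Af j := fun j => Eventually.of_forall fun ω =>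
    Finset.sum_nonneg fun m hm => mul_nonneg (hW0 j m hm) (le_max_right _ _)
  have hcv_tend : Tendsto (fun k => S8.J P (cv k)) atTop (nhds 0) :=
    hstar.comp hφmono.tendsto_atTop
  have hCj : Tendsto (fun j => S8.J P (Cf j)) atTop (nhds 0) := by
    refine S8.lemC P ⇑g g.aestronglyMeasurable hg0 cv hcv_aesm hcv0 hcvg_le hcv_tend
      Cf hCf_aesm hCf0 fun j => ⟨T j, W j, hW0 j, hW1 j, hWge j, Eventually.of_forall
        fun ω => le_rfl⟩
  -- g ≤ H via the defect of the y's
  have hgH_j : Tendsto (fun j => S8.J P (fun ω => max (g ω - y j ω) 0)) atTop (nhds 0) := by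
    refine S8.lemC P ⇑g g.aestronglyMeasurable hg0 cv hcv_aesm hcv0 hcvg_le hcv_tend
      (fun j ω => max (g ω - y j ω) 0) (fun j => haesm_pp g (y j))
      (fun j => hpp0 g (y j)) ?_
    intro j
    refine ⟨T j, W j, hW0 j, hW1 j, hWge j, ?_⟩
    filter_upwards [hYco j] with ω hω
    calc max (g ω - y j ω) 0
        = max (g ω - ∑ m ∈ T j, W j m * h (φ m) ω) 0 := by rw [hω]
      _ ≤ ∑ m ∈ T j, W j m * max (g ω - h (φ m) ω) 0 :=
          S8.pos_part_sum_le _ _ (hW0 j) (hW1 j) _ _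
  have hJgH : S8.J P (fun ω => max (g ω - H ω) 0) = 0 := by
    have hub : ∀ j, S8.J P (fun ω => max (g ω - H ω) 0) ≤
        S8.J P (fun ω => max (g ω - y j ω) 0) + dist0 P (y j) H := by
      intro j
      rw [S8.dist0_eq_J]
      refine S8.J_le_J_add_J P (haesm_pp g H) (haesm_pp g (y j))
        (S8.aesm_abs_sub P (y j) H) (hpp0 g H) (hpp0 g (y j))
        (Eventually.of_forall fun ω => abs_nonneg _)
        (Eventually.of_forall fun ω => ?_)
      refine max_le ?_ (by positivity)
      calc g ω - H ω = (g ω - y j ω) + (y j ω - H ω) := by ring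
        _ ≤ max (g ω - y j ω) 0 + |y j ω - H ω| :=
            add_le_add (le_max_left _ _) (le_abs_self _)
    have hlim : Tendsto (fun j => S8.J P (fun ω => max (g ω - y j ω) 0)
        + dist0 P (y j) H) atTop (nhds 0) := by
      have := hgH_j.add hyH
      simpa using this
    have hle0 : S8.J P (fun ω => max (g ω - H ω) 0) ≤ 0 :=
      ge_of_tendsto hlim (Eventually.of_forall hub)
    exact le_antisymm hle0 (S8.J_nonneg P (hpp0 g H))
  have hgleH : g ≤ H := by
    have hae0 : (fun ω => min 1 (max (g ω - H ω) 0)) =ᵐ[P] 0 :=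
      (integral_eq_zero_iff_of_nonneg (fun ω => S8.min1_nonneg (le_max_right _ _))
        (S8.integrable_min1 P (haesm_pp g H) (hpp0 g H))).1 hJgH
    rw [← MeasureTheory.AEEqFun.coeFn_le]
    filter_upwards [hae0] with ω hω
    simp only [Pi.zero_apply] at hω
    have hmax0 : max (g ω - H ω) 0 = 0 := by
      rcases le_or_gt (max (g ω - H ω) 0) 1 with h1 | h1
      · rwa [min_eq_right h1] at hω
      · rw [min_eq_left h1.le] at hω; norm_num at hω
    have := le_max_left (g ω - H ω) 0
    rw [hmax0] at this
    linarith
  have hgH : g = H := hg.2 H hHC hgleH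
  rw [← hgH] at hyH
  -- upper bound for the excess of the y's
  have hup : ∀ j, S8.J P (Af j) ≤ dist0 P (y j) g + S8.J P (Cf j) := by
    intro j
    rw [S8.dist0_eq_J]
    refine S8.J_le_J_add_J P (hAf_aesm j) (S8.aesm_abs_sub P (y j) g) (hCf_aesm j)
      (hAf0 j) (Eventually.of_forall fun ω => abs_nonneg _) (hCf0 j) ?_
    filter_upwards [hYco j] with ω hω
    have hid : Af j ω = (∑ m ∈ T j, W j m * h (φ m) ω - g ω) + Cf j ω := by
      have e : ∀ m ∈ T j, W j m * av m ω
          = W j m * (h (φ m) ω - g ω) + W j m * cv m ω := by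
        intro m hm
        have h1 : av m ω = (h (φ m) ω - g ω) + cv m ω := by
          have := S8.pos_part_eq (h (φ m) ω - g ω)
          have hns : -(h (φ m) ω - g ω) = g ω - h (φ m) ω := by ring
          rw [hns] at this
          exact this
        rw [h1]; ring
      rw [hAfdef]
      simp only []
      rw [Finset.sum_congr rfl e, Finset.sum_add_distrib]
      congr 1
      simp only [mul_sub]
      rw [Finset.sum_sub_distrib, ← Finset.sum_mul, hW1 j, one_mul]
    rw [hid]
    have h2 : ∑ m ∈ T j, W j m * h (φ m) ω - g ω = y j ω - g ω := by rw [hω]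
    rw [h2]
    exact add_le_add (le_abs_self _) le_rfl
  -- lower bound for the excess of the y's
  have hlow2 : ∀ j, 3*ε/4 ≤ S8.J P (Af j) := by
    intro j
    have hint_avm : ∀ m, Integrable (fun ω => min 1 (av m ω)) P := fun m =>
      S8.integrable_min1 P (hav_aesm m) (hav0 m)
    calc 3*ε/4 = ∑ m ∈ T j, W j m * (3*ε/4) := by
          rw [← Finset.sum_mul, hW1 j, one_mul]
      _ ≤ ∑ m ∈ T j, W j m * S8.J P (av m) := Finset.sum_le_sum fun m hm =>
          mul_le_mul_of_nonneg_left (hlow m) (hW0 j m hm)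
      _ = ∫ ω, ∑ m ∈ T j, W j m * min 1 (av m ω) ∂P := by
          rw [integral_finset_sum _ (fun m _ => (hint_avm m).const_mul (W j m))]
          exact Finset.sum_congr rfl fun m _ => (integral_const_mul _ _).symm
      _ ≤ S8.J P (Af j) := by
          refine integral_mono_ae
            (integrable_finset_sum _ (fun m _ => (hint_avm m).const_mul (W j m)))
            (S8.integrable_min1 P (hAf_aesm j) (hAf0 j))
            (Eventually.of_forall fun ω => ?_)
          exact S8.pw_jensen (T j) (W j) (hW0 j) (hW1 j) (fun m => av m ω)
            (fun m _ => le_max_right _ _)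
  -- contradiction
  have hsum_tend : Tendsto (fun j => dist0 P (y j) g + S8.J P (Cf j)) atTop (nhds 0) := by
    have := hyH.add hCj
    simpa using this
  have hfin : (3*ε/4 : ℝ) ≤ 0 :=
    ge_of_tendsto hsum_tend (Eventually.of_forall fun j =>
      le_trans (hlow2 j) (hup j))
  linarith
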